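/- Fix N > 0. There exist constants C > 0 and a₀ > 0 such that for all a with 0 < a ≤ a₀, ∫_ℝ q₀(z)·|L(z) − μ₀|³ dz ≤ C·a⁶, where μ₀ = ∫_ℝ q₀(z)·L(z) dz. In other words, the third absolute central moment of the log-likelihood ratio L under q₀ is O(a⁶) as a → 0⁺. -/

import Mathlib

open MeasureTheory

/-- Density of the Gaussian distribution with mean `0` and variance `N/2`. -/
noncomputable def q0 (N z : ℝ) : ℝ := (Real.sqrt (Real.pi * N))⁻¹ * Real.exp (-z ^ 2 / N)

/-- Density of the Gaussian distribution with mean `a` and variance `N/2`. -/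
noncomputable def qa (N a z : ℝ) : ℝ := (Real.sqrt (Real.pi * N))⁻¹ * Real.exp (-(z - a) ^ 2 / N)

/-- The binary mixture density `½ q_a + ½ q_{-a}`. -/
noncomputable def qmix (N a z : ℝ) : ℝ := (1 / 2) * qa N a z + (1 / 2) * qa N (-a) z

/-- The log-likelihood ratio `log (q̃(z)/q₀(z))`. -/
noncomputable def llr (N a z : ℝ) : ℝ := Real.log (qmix N a z / q0 N z)

lemma q0_nonneg (N z : ℝ) : 0 ≤ q0 N z := by
  unfold q0; positivity

lemma integrable_pow_mul_gauss {b : ℝ} (hb : 0 < b) (n : ℕ) :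
    Integrable (fun x : ℝ => x ^ n * Real.exp (-b * x ^ 2)) := by
  have hn : (-1 : ℝ) < (n : ℝ) := lt_of_lt_of_le (by norm_num) (Nat.cast_nonneg n)
  simpa [Real.rpow_natCast] using integrable_rpow_mul_exp_neg_mul_sq hb hn

lemma integrable_q0_poly (N : ℝ) (hN : 0 < N) (c0 c2 c4 c6 : ℝ) :
    Integrable (fun z : ℝ => q0 N z * (c0 + c2 * z ^ 2 + c4 * z ^ 4 + c6 * z ^ 6)) := by
  have hb : (0 : ℝ) < 1 / N := by positivity
  have key : (fun z : ℝ => q0 N z * (c0 + c2 * z ^ 2 + c4 * z ^ 4 + c6 * z ^ 6))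
      = fun z : ℝ => (Real.sqrt (Real.pi * N))⁻¹ *
        (c0 * (z ^ 0 * Real.exp (-(1/N) * z ^ 2)) + c2 * (z ^ 2 * Real.exp (-(1/N) * z ^ 2))
        + c4 * (z ^ 4 * Real.exp (-(1/N) * z ^ 2)) + c6 * (z ^ 6 * Real.exp (-(1/N) * z ^ 2))) := by
    funext z
    unfold q0
    rw [show (-z ^ 2 / N : ℝ) = -(1/N) * z ^ 2 by ring]
    ring
  rw [key]
  exact (((((integrable_pow_mul_gauss hb 0).const_mul c0).add
    ((integrable_pow_mul_gauss hb 2).const_mul c2)).add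
    ((integrable_pow_mul_gauss hb 4).const_mul c4)).add
    ((integrable_pow_mul_gauss hb 6).const_mul c6)).const_mul _

lemma llr_eq (N : ℝ) (hN : 0 < N) (a z : ℝ) :
    llr N a z = -a ^ 2 / N + Real.log (Real.cosh (2 * a * z / N)) := by
  have hs : (0 : ℝ) < Real.sqrt (Real.pi * N) := Real.sqrt_pos.2 (by positivity)
  have key : qmix N a z / q0 N z = Real.exp (-a ^ 2 / N) * Real.cosh (2 * a * z / N) := by
    unfold qmix qa q0
    rw [Real.cosh_eq]
    have h1 : Real.exp (-(z - a) ^ 2 / N)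
        = Real.exp (-a ^ 2 / N) * Real.exp (2 * a * z / N) * Real.exp (-z ^ 2 / N) := by
      rw [← Real.exp_add, ← Real.exp_add]
      congr 1
      field_simp
      ring
    have h2 : Real.exp (-(z - -a) ^ 2 / N)
        = Real.exp (-a ^ 2 / N) * Real.exp (-(2 * a * z / N)) * Real.exp (-z ^ 2 / N) := by
      rw [← Real.exp_add, ← Real.exp_add]
      congr 1
      field_simp
      ring
    rw [h1, h2]
    have he : Real.exp (-z ^ 2 / N) ≠ 0 := Real.exp_ne_zero _
    field_simp
  rw [show _root_.llr N a z = Real.log (qmix N a z / q0 N z) from rfl, key, Real.log_mul (Real.exp_ne_zero _) (ne_of_gt (Real.cosh_pos _)),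
    Real.log_exp]

lemma log_cosh_le (x : ℝ) : Real.log (Real.cosh x) ≤ x ^ 2 / 2 := by
  have h := Real.cosh_le_exp_half_sq x
  calc Real.log (Real.cosh x) ≤ Real.log (Real.exp (x ^ 2 / 2)) :=
        Real.log_le_log (Real.cosh_pos x) h
    _ = x ^ 2 / 2 := Real.log_exp _

lemma llr_abs_le (N : ℝ) (hN : 0 < N) (a z : ℝ) :
    |llr N a z| ≤ a ^ 2 * (2 * z ^ 2 / N ^ 2 + 1 / N) := by
  rw [llr_eq N hN a z]
  have h0 : 0 ≤ Real.log (Real.cosh (2 * a * z / N)) :=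
    Real.log_nonneg (Real.one_le_cosh _)
  have h1 : Real.log (Real.cosh (2 * a * z / N)) ≤ 2 * (a ^ 2 * z ^ 2) / N ^ 2 := by
    have := log_cosh_le (2 * a * z / N)
    calc Real.log (Real.cosh (2 * a * z / N)) ≤ (2 * a * z / N) ^ 2 / 2 := this
      _ = 2 * (a ^ 2 * z ^ 2) / N ^ 2 := by field_simp
  have h2 : a ^ 2 * (2 * z ^ 2 / N ^ 2 + 1 / N) = 2 * (a ^ 2 * z ^ 2) / N ^ 2 + a ^ 2 / N := by
    field_simp
  have h3 : (0 : ℝ) ≤ a ^ 2 / N := by positivity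
  have h4 : (0 : ℝ) ≤ 2 * (a ^ 2 * z ^ 2) / N ^ 2 := by positivity
  rw [abs_le, h2]
  constructor <;> [skip; skip] <;>
    · have h5 : -a ^ 2 / N = -(a ^ 2 / N) := by ring
      rw [h5]
      linarith

/-- The third absolute central moment of the log-likelihood ratio `L` under `q₀` is `O(a⁶)`. -/
theorem third_moment_llr_q0 (N : ℝ) (hN : 0 < N) :
    ∃ C > (0 : ℝ), ∃ a₀ > (0 : ℝ), ∀ a : ℝ, 0 < a → a ≤ a₀ →
      (∫ z : ℝ, q0 N z * |llr N a z - ∫ w : ℝ, q0 N w * llr N a w| ^ 3) ≤ C * a ^ 6 := by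
  set B : ℝ := ∫ z : ℝ, q0 N z * (2 * z ^ 2 / N ^ 2 + 1 / N) with hB
  have hB0 : 0 ≤ B :=
    integral_nonneg fun z => mul_nonneg (q0_nonneg N z) (by positivity)
  set D : ℝ := 1 / N + B with hD
  have hD0 : 0 ≤ D := add_nonneg (by positivity) hB0
  set C : ℝ := ∫ z : ℝ, q0 N z * (2 * z ^ 2 / N ^ 2 + D) ^ 3 with hC
  have hC0 : 0 ≤ C := integral_nonneg fun z =>
    mul_nonneg (q0_nonneg N z) (pow_nonneg (add_nonneg (by positivity) hD0) 3)
  -- integrability of the cubic bound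
  have hintC : Integrable (fun z : ℝ => q0 N z * (2 * z ^ 2 / N ^ 2 + D) ^ 3) := by
    have key : (fun z : ℝ => q0 N z * (2 * z ^ 2 / N ^ 2 + D) ^ 3)
        = fun z : ℝ => q0 N z * (D ^ 3 + (6 * D ^ 2 / N ^ 2) * z ^ 2
          + (12 * D / N ^ 4) * z ^ 4 + (8 / N ^ 6) * z ^ 6) := by
      funext z
      congr 1
      field_simp
      ring
    rw [key]
    exact integrable_q0_poly N hN _ _ _ _
  have hintB : Integrable (fun z : ℝ => q0 N z * (2 * z ^ 2 / N ^ 2 + 1 / N)) := by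
    have key : (fun z : ℝ => q0 N z * (2 * z ^ 2 / N ^ 2 + 1 / N))
        = fun z : ℝ => q0 N z * (1 / N + (2 / N ^ 2) * z ^ 2 + 0 * z ^ 4 + 0 * z ^ 6) := by
      funext z
      congr 1
      field_simp
      ring
    rw [key]
    exact integrable_q0_poly N hN _ _ _ _
  refine ⟨C + 1, by linarith, 1, one_pos, fun a ha _ => ?_⟩
  set m : ℝ := ∫ w : ℝ, q0 N w * llr N a w with hm
  have hq0 := q0_nonneg N
  have habs := llr_abs_le N hN a
  -- bound on the mean
  have hmb : |m| ≤ a ^ 2 * B := by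
    have h1 : Integrable (fun z : ℝ => a ^ 2 * (q0 N z * (2 * z ^ 2 / N ^ 2 + 1 / N))) :=
      hintB.const_mul _
    have h2 : ‖m‖ ≤ ∫ z : ℝ, a ^ 2 * (q0 N z * (2 * z ^ 2 / N ^ 2 + 1 / N)) := by
      refine norm_integral_le_of_norm_le h1 (ae_of_all _ fun w => ?_)
      rw [Real.norm_eq_abs, abs_mul, abs_of_nonneg (hq0 w)]
      calc q0 N w * |llr N a w| ≤ q0 N w * (a ^ 2 * (2 * w ^ 2 / N ^ 2 + 1 / N)) :=
            mul_le_mul_of_nonneg_left (habs w) (hq0 w)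
        _ = a ^ 2 * (q0 N w * (2 * w ^ 2 / N ^ 2 + 1 / N)) := by ring
    rw [Real.norm_eq_abs] at h2
    rwa [integral_const_mul] at h2
  -- pointwise bound
  have hpt : ∀ z : ℝ, q0 N z * |llr N a z - m| ^ 3
      ≤ a ^ 6 * (q0 N z * (2 * z ^ 2 / N ^ 2 + D) ^ 3) := by
    intro z
    have h1 : |llr N a z - m| ≤ a ^ 2 * (2 * z ^ 2 / N ^ 2 + D) := by
      calc |llr N a z - m| ≤ |llr N a z| + |m| := abs_sub _ _
        _ ≤ a ^ 2 * (2 * z ^ 2 / N ^ 2 + 1 / N) + a ^ 2 * B := add_le_add (habs z) hmb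
        _ = a ^ 2 * (2 * z ^ 2 / N ^ 2 + D) := by rw [hD]; ring
    have h2 : |llr N a z - m| ^ 3 ≤ (a ^ 2 * (2 * z ^ 2 / N ^ 2 + D)) ^ 3 :=
      pow_le_pow_left₀ (abs_nonneg _) h1 3
    calc q0 N z * |llr N a z - m| ^ 3 ≤ q0 N z * (a ^ 2 * (2 * z ^ 2 / N ^ 2 + D)) ^ 3 :=
          mul_le_mul_of_nonneg_left h2 (hq0 z)
      _ = a ^ 6 * (q0 N z * (2 * z ^ 2 / N ^ 2 + D) ^ 3) := by ring
  have step : (∫ z : ℝ, q0 N z * |llr N a z - m| ^ 3)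
      ≤ ∫ z : ℝ, a ^ 6 * (q0 N z * (2 * z ^ 2 / N ^ 2 + D) ^ 3) := by
    refine integral_mono_of_nonneg (ae_of_all _ fun z => ?_) (hintC.const_mul _)
      (ae_of_all _ hpt)
    exact mul_nonneg (hq0 z) (pow_nonneg (abs_nonneg _) 3)
  rw [integral_const_mul, ← hC] at step
  have h6 : (0 : ℝ) ≤ a ^ 6 := pow_nonneg ha.le 6
  nlinarith [step]
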